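/- arXiv:2602.12830 — 4 statements merged into one kernel-verified Lean document; each statement's English description precedes it below -/
import Mathlib

section
/- Let n be a positive integer and c ≥ n a real number. For each positive integer l define ρ̄_l := 1 - (1 - min{1, c/(n·l)})^n. Then ∑_{l=1}^{k} ρ̄_l = k for every positive integer k ≤ c/n, and for every integer k > c/n one has c̄ + c·log k ≥ ∑_{l=1}^{k} ρ̄_l ≥ c_ + (c/n)·log k, where c̄ := ⌊c/n⌋ - c·log⌊c/n⌋ and c_ := ⌊c/n⌋ - (c/n)/⌊c/n⌋ - (c/n)·log⌊c/n⌋. -/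
open Finset

lemma log_succ_le_inv (k : ℕ) (hk : 1 ≤ k) :
    Real.log ((k : ℝ) + 1) - Real.log k ≤ (k : ℝ)⁻¹ := by
  have hk0 : (0:ℝ) < k := by exact_mod_cast hk
  have h := Real.log_le_sub_one_of_pos (show (0:ℝ) < ((k:ℝ)+1)/k by positivity)
  rw [Real.log_div (by positivity) (ne_of_gt hk0)] at h
  have h2 : ((k:ℝ)+1)/k - 1 = (k:ℝ)⁻¹ := by field_simp; ring
  linarith [h, h2.le]

lemma inv_le_log_succ (k : ℕ) (hk : 1 ≤ k) :
    ((k : ℝ) + 1)⁻¹ ≤ Real.log ((k : ℝ) + 1) - Real.log k := by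
  have hk0 : (0:ℝ) < k := by exact_mod_cast hk
  have h := Real.log_le_sub_one_of_pos (show (0:ℝ) < (k:ℝ)/((k:ℝ)+1) by positivity)
  rw [Real.log_div (ne_of_gt hk0) (by positivity)] at h
  have h2 : (k:ℝ)/((k:ℝ)+1) - 1 = -((k:ℝ)+1)⁻¹ := by field_simp; ring
  linarith

lemma sum_inv_le_log (m k : ℕ) (hm : 1 ≤ m) (hk : m ≤ k) :
    ∑ l ∈ Finset.Ioc m k, ((l : ℝ))⁻¹ ≤ Real.log k - Real.log m := by
  induction k with
  | zero => omega
  | succ k ih =>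
    rcases Nat.lt_or_ge m (k+1) with h | h
    · have hk' : m ≤ k := by omega
      have hk1 : 1 ≤ k := by omega
      rw [Finset.sum_Ioc_succ_top hk']
      have h1 := ih hk'
      have h2 := inv_le_log_succ k hk1
      push_cast
      push_cast at h1 h2
      linarith
    · have : m = k + 1 := by omega
      subst this
      simp

lemma sum_inv_ge_log (m k : ℕ) (hm : 1 ≤ m) (hk : m ≤ k) :
    Real.log ((k:ℝ)+1) - Real.log ((m:ℝ)+1) ≤ ∑ l ∈ Finset.Ioc m k, ((l : ℝ))⁻¹ := by
  induction k with
  | zero => omega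
  | succ k ih =>
    rcases Nat.lt_or_ge m (k+1) with h | h
    · have hk' : m ≤ k := by omega
      have hk1 : 1 ≤ k := by omega
      rw [Finset.sum_Ioc_succ_top hk']
      have h1 := ih hk'
      have h2 := log_succ_le_inv (k+1) (by omega)
      push_cast at h1 h2 ⊢
      linarith
    · have : m = k + 1 := by omega
      subst this
      simp

theorem stmt_0 (n : ℕ) (hn : 0 < n) (c : ℝ) (hc : (n : ℝ) ≤ c)
    (ρbar : ℕ → ℝ)
    (hρbar : ∀ l : ℕ, ρbar l = 1 - (1 - min 1 (c / (n * l))) ^ n) :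
    (∀ k : ℕ, 0 < k → (k : ℝ) ≤ c / n →
      ∑ l ∈ Finset.Icc 1 k, ρbar l = k) ∧
    (∀ k : ℕ, c / n < (k : ℝ) →
      ((⌊c / n⌋₊ : ℝ) - c * Real.log (⌊c / n⌋₊ : ℝ)) + c * Real.log k ≥
        ∑ l ∈ Finset.Icc 1 k, ρbar l ∧
      ∑ l ∈ Finset.Icc 1 k, ρbar l ≥
        ((⌊c / n⌋₊ : ℝ) - (c / n) / (⌊c / n⌋₊ : ℝ)
          - (c / n) * Real.log (⌊c / n⌋₊ : ℝ)) + (c / n) * Real.log k) := by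
  have hn0 : (0:ℝ) < n := by exact_mod_cast hn
  have hc0 : (0:ℝ) < c := lt_of_lt_of_le hn0 hc
  have hcn1 : (1:ℝ) ≤ c / n := (one_le_div hn0).mpr hc
  -- ρbar l = 1 for 1 ≤ l ≤ c/n
  have hone : ∀ l : ℕ, 0 < l → (l : ℝ) ≤ c / n → ρbar l = 1 := by
    intro l hl hle
    have hl0 : (0:ℝ) < l := by exact_mod_cast hl
    have h1 : (1:ℝ) ≤ c / (n * l) := by
      rw [le_div_iff₀ hn0] at hle
      rw [le_div_iff₀ (by positivity)]
      nlinarith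
    rw [hρbar l, min_eq_left h1]
    simp [zero_pow hn.ne']
  have hsum1 : ∀ k : ℕ, (k : ℝ) ≤ c / n → ∑ l ∈ Finset.Icc 1 k, ρbar l = k := by
    intro k hk
    have hall : ∀ l ∈ Finset.Icc 1 k, ρbar l = 1 := by
      intro l hl
      rw [Finset.mem_Icc] at hl
      refine hone l (by omega) (le_trans ?_ hk)
      exact_mod_cast hl.2
    rw [Finset.sum_congr rfl hall]
    simp
  constructor
  · intro k _ hk; exact hsum1 k hk
  · intro k hk
    set m : ℕ := ⌊c / n⌋₊ with hm
    have hm1 : 1 ≤ m := Nat.le_floor (by exact_mod_cast hcn1)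
    have hm0 : (0:ℝ) < m := by exact_mod_cast hm1
    have hmle : (m : ℝ) ≤ c / n := Nat.floor_le (by positivity)
    have hmlt : c / n < (m : ℝ) + 1 := Nat.lt_floor_add_one _
    have hmk : m < k := by
      have : (m : ℝ) < k := lt_of_le_of_lt hmle hk
      exact_mod_cast this
    have hk1 : 1 ≤ k := by omega
    have hk0 : (0:ℝ) < k := by exact_mod_cast hk1
    -- split sum
    have hsplit : ∑ l ∈ Finset.Icc 1 k, ρbar l
        = (m : ℝ) + ∑ l ∈ Finset.Ioc m k, ρbar l := by
      have hIoc : ∀ j, Finset.Icc 1 j = Finset.Ioc 0 j := fun j => by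
        ext x; simp [Nat.lt_iff_add_one_le]
      rw [hIoc, ← Finset.sum_Ioc_consecutive _ (Nat.zero_le m) (le_of_lt hmk)]
      congr 1
      rw [← hIoc m, hsum1 m hmle]
    -- bounds on ρbar l for l > m
    have hterm : ∀ l ∈ Finset.Ioc m k,
        (c / n) * (l:ℝ)⁻¹ ≤ ρbar l ∧ ρbar l ≤ c * (l:ℝ)⁻¹ := by
      intro l hl
      rw [Finset.mem_Ioc] at hl
      have hl0 : (0:ℝ) < l := by
        have : 0 < l := by omega
        exact_mod_cast this
      have hlgt : c / n < (l:ℝ) := by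
        have : (m:ℝ) + 1 ≤ l := by exact_mod_cast hl.1
        linarith
      set x : ℝ := c / (n * l) with hx
      have hx0 : 0 < x := by positivity
      have hx1 : x ≤ 1 := by
        rw [hx, div_le_one (by positivity)]
        rw [div_lt_iff₀ hn0] at hlgt
        linarith
      have hρ : ρbar l = 1 - (1 - x)^n := by rw [hρbar l, min_eq_right hx1]
      constructor
      · -- lower: x ≤ 1 - (1-x)^n
        have hpow : (1 - x)^n ≤ (1 - x)^1 :=
          pow_le_pow_of_le_one (by linarith) (by linarith) hn
        have hxl : x = (c/n) * (l:ℝ)⁻¹ := by rw [hx]; field_simp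
        rw [hρ, ← hxl]
        simp at hpow
        linarith
      · -- upper: 1 - (1-x)^n ≤ n x
        have hb : 1 + (n:ℝ) * (-x) ≤ (1 + (-x))^n :=
          one_add_mul_le_pow (by linarith) n
        have hxl : (n:ℝ) * x = c * (l:ℝ)⁻¹ := by rw [hx]; field_simp
        rw [hρ]
        rw [← hxl]
        have : (1 - x) = (1 + (-x)) := by ring
        rw [this]
        linarith
    have hsle := sum_inv_le_log m k hm1 (le_of_lt hmk)
    have hsge := sum_inv_ge_log m k hm1 (le_of_lt hmk)
    have hub : ∑ l ∈ Finset.Ioc m k, ρbar l ≤ c * (Real.log k - Real.log m) := by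
      calc ∑ l ∈ Finset.Ioc m k, ρbar l
          ≤ ∑ l ∈ Finset.Ioc m k, c * (l:ℝ)⁻¹ :=
            Finset.sum_le_sum (fun l hl => (hterm l hl).2)
        _ = c * ∑ l ∈ Finset.Ioc m k, (l:ℝ)⁻¹ := by rw [Finset.mul_sum]
        _ ≤ c * (Real.log k - Real.log m) := by
            exact mul_le_mul_of_nonneg_left hsle (le_of_lt hc0)
    have hlb : (c/n) * (Real.log ((k:ℝ)+1) - Real.log ((m:ℝ)+1))
        ≤ ∑ l ∈ Finset.Ioc m k, ρbar l := by
      calc (c/n) * (Real.log ((k:ℝ)+1) - Real.log ((m:ℝ)+1))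
          ≤ (c/n) * ∑ l ∈ Finset.Ioc m k, (l:ℝ)⁻¹ :=
            mul_le_mul_of_nonneg_left hsge (by positivity)
        _ = ∑ l ∈ Finset.Ioc m k, (c/n) * (l:ℝ)⁻¹ := by rw [Finset.mul_sum]
        _ ≤ ∑ l ∈ Finset.Ioc m k, ρbar l :=
            Finset.sum_le_sum (fun l hl => (hterm l hl).1)
    constructor
    · rw [ge_iff_le, hsplit]; linarith
    · rw [ge_iff_le, hsplit]
      have h1 : Real.log (k:ℝ) ≤ Real.log ((k:ℝ)+1) :=
        Real.log_le_log (by positivity) (by linarith)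
      have h2 : Real.log ((m:ℝ)+1) - Real.log (m:ℝ) ≤ (m:ℝ)⁻¹ :=
        log_succ_le_inv m hm1
      have hcn0 : 0 ≤ c/n := by positivity
      have hinv : (c/n) / (m:ℝ) = (c/n) * (m:ℝ)⁻¹ := div_eq_mul_inv _ _
      nlinarith [mul_le_mul_of_nonneg_left h2 hcn0, mul_le_mul_of_nonneg_left h1 hcn0]
end

section
/- Let Π be a nonempty finite set, ξ ∈ (0,1), C ∈ ℝ, and let SW, SW' : Π → ℝ satisfy SW(π) ≤ C and SW'(π) ≤ C for all π. Let E, E' ⊆ Π. Define P on Π × {0,1} by P(π,1) := (1/|Π|)·ξ^{C-SW(π)} if π ∈ E and 0 otherwise, and P(π,0) := (1/|Π|)·(1 - ξ^{C-SW(π)}) if π ∈ E and 1/|Π| otherwise; define P' analogously from SW' and E'. Then (1/2)·∑_{π∈Π} ∑_{m∈{0,1}} |P(π,m) - P'(π,m)| ≤ |log ξ|·max_{π∈Π} |SW'(π) - SW(π)| + |E Δ E'| / |Π|, where E Δ E' := (E \ E') ∪ (E' \ E) is the symmetric difference. -/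
lemma aux_rpow_abs {ξ : ℝ} (h0 : 0 < ξ) (h1 : ξ < 1) {a b : ℝ} (ha : 0 ≤ a) (hb : 0 ≤ b) :
    |ξ ^ a - ξ ^ b| ≤ |Real.log ξ| * |a - b| := by
  wlog hab : a ≤ b generalizing a b
  · rw [abs_sub_comm, abs_sub_comm a b]
    exact this hb ha (le_of_not_ge hab)
  have hmono : ξ ^ b ≤ ξ ^ a := Real.rpow_le_rpow_of_exponent_ge h0 h1.le hab
  have hξa : ξ ^ a ≤ 1 := Real.rpow_le_one h0.le h1.le ha
  have hlog : Real.log ξ < 0 := Real.log_neg h0 h1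
  rw [abs_of_nonneg (sub_nonneg.2 hmono), abs_of_neg hlog, abs_of_nonpos (sub_nonpos.2 hab)]
  have hsplit : ξ ^ b = ξ ^ a * ξ ^ (b - a) := by
    rw [← Real.rpow_add h0]; ring_nf
  have hexp : ξ ^ (b - a) = Real.exp ((b - a) * Real.log ξ) := by
    rw [Real.rpow_def_of_pos h0]; ring_nf
  have hge : 1 + (b - a) * Real.log ξ ≤ ξ ^ (b - a) := by
    rw [hexp]; linarith [Real.add_one_le_exp ((b - a) * Real.log ξ)]
  have hpos : 0 < ξ ^ a := Real.rpow_pos_of_pos h0 a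
  have hle1 : ξ ^ (b - a) ≤ 1 := Real.rpow_le_one h0.le h1.le (by linarith)
  nlinarith [mul_nonneg (sub_nonneg.2 hξa) (sub_nonneg.2 hle1)]

theorem stmt_9 {Γ : Type*} [Fintype Γ] [Nonempty Γ] [DecidableEq Γ]
    (ξ : ℝ) (hξ : ξ ∈ Set.Ioo (0 : ℝ) 1) (C : ℝ)
    (SW SW' : Γ → ℝ) (hSW : ∀ π, SW π ≤ C) (hSW' : ∀ π, SW' π ≤ C)
    (E E' : Finset Γ) (P P' : Γ → Bool → ℝ)
    (hP1 : ∀ π, P π true =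
      if π ∈ E then (1 / (Fintype.card Γ : ℝ)) * ξ ^ (C - SW π) else 0)
    (hP0 : ∀ π, P π false =
      if π ∈ E then (1 / (Fintype.card Γ : ℝ)) * (1 - ξ ^ (C - SW π))
      else 1 / (Fintype.card Γ : ℝ))
    (hP1' : ∀ π, P' π true =
      if π ∈ E' then (1 / (Fintype.card Γ : ℝ)) * ξ ^ (C - SW' π) else 0)
    (hP0' : ∀ π, P' π false =
      if π ∈ E' then (1 / (Fintype.card Γ : ℝ)) * (1 - ξ ^ (C - SW' π))
      else 1 / (Fintype.card Γ : ℝ)) :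
    (1 / 2) * ∑ π, ∑ m, |P π m - P' π m| ≤
      |Real.log ξ| * Finset.univ.sup' Finset.univ_nonempty (fun π => |SW' π - SW π|) +
      (((E \ E') ∪ (E' \ E)).card : ℝ) / (Fintype.card Γ : ℝ) := by
  obtain ⟨h0, h1⟩ := hξ
  set N : ℝ := (Fintype.card Γ : ℝ) with hNdef
  have hN : 0 < N := by
    rw [hNdef]; exact_mod_cast Fintype.card_pos
  set M : ℝ := Finset.univ.sup' Finset.univ_nonempty (fun π => |SW' π - SW π|) with hM
  have hMle : ∀ π : Γ, |SW' π - SW π| ≤ M :=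
    fun π => Finset.le_sup' (fun π => |SW' π - SW π|) (Finset.mem_univ π)
  have hM0 : 0 ≤ M := le_trans (abs_nonneg _) (hMle (Classical.arbitrary Γ))
  set L : ℝ := |Real.log ξ| with hL
  have hL0 : 0 ≤ L := abs_nonneg _
  have hNinv : (0:ℝ) ≤ 1 / N := by positivity
  have hxbd : ∀ π' : Γ, 0 ≤ ξ ^ (C - SW π') ∧ ξ ^ (C - SW π') ≤ 1 :=
    fun π' => ⟨(Real.rpow_pos_of_pos h0 _).le,
      Real.rpow_le_one h0.le h1.le (sub_nonneg.2 (hSW π'))⟩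
  have hxbd' : ∀ π' : Γ, 0 ≤ ξ ^ (C - SW' π') ∧ ξ ^ (C - SW' π') ≤ 1 :=
    fun π' => ⟨(Real.rpow_pos_of_pos h0 _).le,
      Real.rpow_le_one h0.le h1.le (sub_nonneg.2 (hSW' π'))⟩
  have key : ∀ π : Γ, (∑ m, |P π m - P' π m|) ≤
      2 / N * (L * M) + (if π ∈ (E \ E' ∪ E' \ E) then 2 / N else 0) := by
    intro π
    rw [Fintype.sum_bool, hP1, hP0, hP1', hP0']
    set x : ℝ := ξ ^ (C - SW π) with hx
    set y : ℝ := ξ ^ (C - SW' π) with hy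
    obtain ⟨hx0, hx1⟩ := hxbd π
    obtain ⟨hy0, hy1⟩ := hxbd' π
    have hLM : 0 ≤ 2 / N * (L * M) := by positivity
    by_cases hE : π ∈ E <;> by_cases hE' : π ∈ E'
    · have hnot : π ∉ (E \ E' ∪ E' \ E) := by
        simp [Finset.mem_union, Finset.mem_sdiff, hE, hE']
      rw [if_pos hE, if_pos hE', if_pos hE, if_pos hE', if_neg hnot]
      have hxy : |x - y| ≤ L * M := by
        have := aux_rpow_abs h0 h1 (sub_nonneg.2 (hSW π)) (sub_nonneg.2 (hSW' π))
        have heq : |(C - SW π) - (C - SW' π)| = |SW' π - SW π| := by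
          congr 1; ring
        calc |x - y| ≤ L * |(C - SW π) - (C - SW' π)| := this
          _ = L * |SW' π - SW π| := by rw [heq]
          _ ≤ L * M := mul_le_mul_of_nonneg_left (hMle π) hL0
      rw [show 1 / N * x - 1 / N * y = 1 / N * (x - y) by ring,
        show 1 / N * (1 - x) - 1 / N * (1 - y) = 1 / N * (y - x) by ring,
        abs_mul, abs_mul, abs_of_nonneg hNinv, abs_sub_comm y x]
      have h := mul_le_mul_of_nonneg_left hxy hNinv
      have e : 2 / N * (L * M) = 1 / N * (L * M) + 1 / N * (L * M) := by ring
      linarith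
    · have hmem : π ∈ (E \ E' ∪ E' \ E) :=
        Finset.mem_union_left _ (Finset.mem_sdiff.2 ⟨hE, hE'⟩)
      rw [if_pos hE, if_neg hE', if_pos hE, if_neg hE', if_pos hmem]
      rw [sub_zero, show 1 / N * (1 - x) - 1 / N = 1 / N * (-x) by ring,
        abs_mul, abs_mul, abs_of_nonneg hNinv, abs_neg, abs_of_nonneg hx0]
      have h := mul_le_mul_of_nonneg_left hx1 hNinv
      have e : 2 / N = 1 / N * 1 + 1 / N * 1 := by ring
      linarith
    · have hmem : π ∈ (E \ E' ∪ E' \ E) :=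
        Finset.mem_union_right _ (Finset.mem_sdiff.2 ⟨hE', hE⟩)
      rw [if_neg hE, if_pos hE', if_neg hE, if_pos hE', if_pos hmem]
      rw [zero_sub, show 1 / N - 1 / N * (1 - y) = 1 / N * y by ring,
        abs_neg, abs_mul, abs_of_nonneg hNinv, abs_of_nonneg hy0]
      have h := mul_le_mul_of_nonneg_left hy1 hNinv
      have e : 2 / N = 1 / N * 1 + 1 / N * 1 := by ring
      linarith
    · have hnot : π ∉ (E \ E' ∪ E' \ E) := by
        simp [Finset.mem_union, Finset.mem_sdiff, hE, hE']
      rw [if_neg hE, if_neg hE', if_neg hE, if_neg hE', if_neg hnot]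
      simp [sub_self]
      positivity
  have hsum : (∑ π : Γ, ∑ m, |P π m - P' π m|) ≤
      N * (2 / N * (L * M)) + ((E \ E' ∪ E' \ E).card : ℝ) * (2 / N) := by
    calc (∑ π : Γ, ∑ m, |P π m - P' π m|)
        ≤ ∑ π : Γ, (2 / N * (L * M) + (if π ∈ (E \ E' ∪ E' \ E) then 2 / N else 0)) :=
          Finset.sum_le_sum fun π _ => key π
      _ = N * (2 / N * (L * M)) + ((E \ E' ∪ E' \ E).card : ℝ) * (2 / N) := by
          rw [Finset.sum_add_distrib, Finset.sum_const, Finset.sum_ite_mem,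
            Finset.univ_inter, Finset.sum_const, Finset.card_univ]
          simp [nsmul_eq_mul, hNdef]
  have hfinal : (1 / 2) * (N * (2 / N * (L * M)) + ((E \ E' ∪ E' \ E).card : ℝ) * (2 / N))
      = L * M + ((E \ E' ∪ E' \ E).card : ℝ) / N := by
    field_simp
  calc (1 / 2) * ∑ π, ∑ m, |P π m - P' π m|
      ≤ (1 / 2) * (N * (2 / N * (L * M)) + ((E \ E' ∪ E' \ E).card : ℝ) * (2 / N)) :=
        mul_le_mul_of_nonneg_left hsum (by norm_num)
    _ = L * M + ((E \ E' ∪ E' \ E).card : ℝ) / N := hfinal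
end

section
/- Let Π be a nonempty finite set, E ⊆ Π with at least two elements, SW : Π → ℝ, and π* ∈ E such that SW(π*) > SW(π) for all π ∈ E with π ≠ π*. Set Ξ_o := SW(π*) - max_{π ∈ E, π ≠ π*} SW(π) > 0. Let δ > 0, let ξ satisfy 0 < ξ < (|E| + δ)^{-1/Ξ_o}, and let C ∈ ℝ with C ≥ SW(π) for all π ∈ Π. Define P(π) := (1/|Π|)·ξ^{C-SW(π)} for π ∈ E and P(π) := 0 otherwise, and ζ := (δ/(|Π|·|E|))·ξ^{C - max_{π∈E, π≠π*} SW(π)}. Then P(π*) - |E|·ζ > ∑_{π ∈ Π, π ≠ π*} P(π). -/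
theorem stmt_12 {Γ : Type*} [Fintype Γ] [Nonempty Γ] [DecidableEq Γ]
    (E : Finset Γ) (SW : Γ → ℝ) (πstar : Γ) (hπstar : πstar ∈ E)
    (hcard : 2 ≤ E.card)
    (hne : (E.erase πstar).Nonempty)
    (hopt : ∀ π ∈ E, π ≠ πstar → SW π < SW πstar)
    (Ξo : ℝ) (hΞo : Ξo = SW πstar - (E.erase πstar).sup' hne SW)
    (δ : ℝ) (hδ : 0 < δ)
    (ξ : ℝ) (hξ0 : 0 < ξ)
    (hξ : ξ < ((E.card : ℝ) + δ) ^ (-(1 / Ξo)))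
    (C : ℝ) (hC : ∀ π, SW π ≤ C)
    (P : Γ → ℝ)
    (hP : ∀ π, P π =
      if π ∈ E then (1 / (Fintype.card Γ : ℝ)) * ξ ^ (C - SW π) else 0)
    (ζ : ℝ)
    (hζ : ζ = (δ / ((Fintype.card Γ : ℝ) * (E.card : ℝ))) *
      ξ ^ (C - (E.erase πstar).sup' hne SW)) :
    P πstar - (E.card : ℝ) * ζ >
      ∑ π ∈ Finset.univ.filter (fun π => π ≠ πstar), P π := by
  set M := (E.erase πstar).sup' hne SW with hM
  have hN : (0:ℝ) < (Fintype.card Γ : ℝ) := by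
    exact_mod_cast Fintype.card_pos
  have hMlt : M < SW πstar := by
    rw [hM]
    exact (Finset.sup'_lt_iff hne).mpr fun b hb =>
      hopt b (Finset.mem_of_mem_erase hb) (Finset.ne_of_mem_erase hb)
  have hΞpos : 0 < Ξo := by rw [hΞo]; linarith
  have hcardR : (2:ℝ) ≤ (E.card : ℝ) := by exact_mod_cast hcard
  have hb1 : (1:ℝ) < (E.card : ℝ) + δ := by linarith
  have hξ1 : ξ < 1 := by
    refine hξ.trans (Real.rpow_lt_one_of_one_lt_of_neg hb1 ?_)
    have : 0 < 1 / Ξo := by positivity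
    linarith
  have hkey : (E.card : ℝ) + δ < ξ ^ (-Ξo) := by
    have h1 : ξ ^ Ξo < ((E.card : ℝ) + δ)⁻¹ := by
      have h2 := Real.rpow_lt_rpow hξ0.le hξ hΞpos
      rwa [← Real.rpow_mul (by linarith : (0:ℝ) ≤ (E.card : ℝ) + δ),
        show -(1 / Ξo) * Ξo = -1 by field_simp,
        Real.rpow_neg_one] at h2
    have hpos : 0 < ξ ^ Ξo := Real.rpow_pos_of_pos hξ0 Ξo
    have h3 : ((E.card : ℝ) + δ)⁻¹⁻¹ < (ξ ^ Ξo)⁻¹ := by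
      exact inv_strictAnti₀ hpos h1
    rw [inv_inv] at h3
    rwa [Real.rpow_neg hξ0.le]
  set T : ℝ := (1 / (Fintype.card Γ : ℝ)) * ξ ^ (C - M) with hT
  have hTpos : 0 < T := by
    have := Real.rpow_pos_of_pos hξ0 (C - M)
    positivity
  -- sum bound
  have heq : ∑ π ∈ Finset.univ.filter (fun π => π ≠ πstar), P π
      = ∑ π ∈ E.erase πstar, P π := by
    refine (Finset.sum_subset ?_ ?_).symm
    · intro x hx
      simp [Finset.mem_filter, (Finset.mem_erase.mp hx).1]
    · intro x hx hx'
      rw [hP x, if_neg]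
      intro hxE
      exact hx' (Finset.mem_erase.mpr ⟨(Finset.mem_filter.mp hx).2, hxE⟩)
  have hterm : ∀ π ∈ E.erase πstar, P π ≤ T := by
    intro π hπ
    rw [hP π, if_pos (Finset.mem_of_mem_erase hπ), hT]
    have hSW : SW π ≤ M := Finset.le_sup' SW hπ
    have := Real.rpow_le_rpow_of_exponent_ge hξ0 hξ1.le
      (by linarith : C - M ≤ C - SW π)
    have h1N : (0:ℝ) ≤ 1 / (Fintype.card Γ : ℝ) := by positivity
    exact mul_le_mul_of_nonneg_left this h1N
  have hsum : ∑ π ∈ Finset.univ.filter (fun π => π ≠ πstar), P π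
      ≤ ((E.card : ℝ) - 1) * T := by
    rw [heq]
    calc ∑ π ∈ E.erase πstar, P π ≤ (E.erase πstar).card • T :=
          Finset.sum_le_card_nsmul _ _ _ hterm
      _ = ((E.erase πstar).card : ℝ) * T := by rw [nsmul_eq_mul]
      _ = ((E.card : ℝ) - 1) * T := by
          rw [Finset.card_erase_of_mem hπstar,
            Nat.cast_sub (by omega : 1 ≤ E.card)]
          norm_num
  -- rewrite LHS
  have hPstar : P πstar = T * ξ ^ (-Ξo) := by
    rw [hP πstar, if_pos hπstar, hT]
    have hexp : C - SW πstar = (C - M) + (-Ξo) := by rw [hΞo]; ring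
    rw [hexp, Real.rpow_add hξ0]
    ring
  have hζ' : (E.card : ℝ) * ζ = δ * T := by
    rw [hζ, hT]
    have hEne : (E.card : ℝ) ≠ 0 := by positivity
    field_simp
  rw [hPstar, hζ']
  have : ((E.card : ℝ) - 1) * T < T * ξ ^ (-Ξo) - δ * T := by
    nlinarith [hkey, hTpos]
  linarith [hsum]
end

section
/- Let n be a positive integer, q ∈ (0,1), and c > n/(1-q) with c ≥ n; set α := c·(1-q)/n > 1, ω := exp(-(1-q)), c_ := ⌊c/n⌋ - (c/n)/⌊c/n⌋ - (c/n)·log⌊c/n⌋, and β := exp(-c_·(1-q)). Let S : ℕ → ℝ satisfy S_k = k for every positive integer k ≤ c/n and S_k ≥ c_ + (c/n)·log k for every integer k > c/n. Then for every positive integer τ, ∑_{k=1}^{τ} exp(-(1-q)·S_k) ≤ (c/n)·ω + α·β/(α-1). -/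
lemma key_ineq (a x : ℝ) (ha : 0 < a) (hx : 1 ≤ x) :
    a * (x + 1) ^ (-(a + 1)) ≤ x ^ (-a) - (x + 1) ^ (-a) := by
  have hx0 : (0:ℝ) < x := by linarith
  have hx1 : (0:ℝ) < x + 1 := by linarith
  have hr0 : (0:ℝ) < (x + 1) / x := by positivity
  -- log lower bound
  have hlog : 1 / (x + 1) ≤ Real.log ((x + 1) / x) := by
    have h := Real.log_le_sub_one_of_pos (show 0 < x / (x + 1) by positivity)
    have heq : Real.log (x / (x + 1)) = - Real.log ((x + 1) / x) := by
      rw [← Real.log_inv]; congr 1; field_simp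
    rw [heq] at h
    have : x / (x + 1) - 1 = -(1 / (x + 1)) := by field_simp; ring
    linarith [this ▸ h]
  have hexp : 1 + a * Real.log ((x + 1) / x) ≤ ((x + 1) / x) ^ a := by
    rw [Real.rpow_def_of_pos hr0]
    have := Real.add_one_le_exp (Real.log ((x + 1) / x) * a)
    linarith [this]
  have h1 : 1 + a / (x + 1) ≤ ((x + 1) / x) ^ a := by
    have : a * (1 / (x + 1)) ≤ a * Real.log ((x + 1) / x) :=
      mul_le_mul_of_nonneg_left hlog ha.le
    calc 1 + a / (x + 1) = 1 + a * (1 / (x + 1)) := by ring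
      _ ≤ 1 + a * Real.log ((x + 1) / x) := by linarith
      _ ≤ _ := hexp
  -- multiply by (x+1)^(-a)
  have hp : (0:ℝ) < (x + 1) ^ (-a) := Real.rpow_pos_of_pos hx1 _
  have hmul : (1 + a / (x + 1)) * (x + 1) ^ (-a) ≤ x ^ (-a) := by
    have h2 : ((x + 1) / x) ^ a * (x + 1) ^ (-a) = x ^ (-a) := by
      rw [Real.div_rpow hx1.le hx0.le, Real.rpow_neg hx1.le, Real.rpow_neg hx0.le]
      field_simp
    calc (1 + a / (x + 1)) * (x + 1) ^ (-a)
        ≤ ((x + 1) / x) ^ a * (x + 1) ^ (-a) := by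
          exact mul_le_mul_of_nonneg_right h1 hp.le
      _ = x ^ (-a) := h2
  have h3 : (x + 1) ^ (-(a + 1)) = (x + 1) ^ (-a) / (x + 1) := by
    rw [show -(a+1) = -a + (-1) by ring, Real.rpow_add hx1, Real.rpow_neg_one]
    ring
  rw [h3]
  have : (1 + a / (x + 1)) * (x + 1) ^ (-a)
      = (x + 1) ^ (-a) + a * ((x + 1) ^ (-a) / (x + 1)) := by
    field_simp
  linarith [this ▸ hmul]

lemma tele (a : ℝ) (ha : 0 < a) (m : ℕ) (hm : 1 ≤ m) :
    ∀ τ : ℕ, m ≤ τ →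
      ∑ k ∈ Finset.Ioc m τ, ((k : ℝ)) ^ (-(a + 1)) ≤
        ((m : ℝ) ^ (-a) - (τ : ℝ) ^ (-a)) / a := by
  intro τ hτ0
  induction τ, hτ0 using Nat.le_induction with
  | base => simp
  | succ τ hτ ih =>
    rw [Finset.sum_Ioc_succ_top hτ]
    have hk1 : (1:ℝ) ≤ (τ : ℝ) := by exact_mod_cast hm.trans hτ
    have hkey := key_ineq a (τ : ℝ) ha hk1
    have hcast : ((τ + 1 : ℕ) : ℝ) = (τ : ℝ) + 1 := by push_cast; ring
    rw [hcast]
    have := ih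
    have haux : (τ:ℝ) ^ (-a) - ((τ:ℝ)+1) ^ (-a) ≥ a * ((τ:ℝ)+1) ^ (-(a+1)) := hkey
    rw [ge_iff_le, ← sub_nonneg] at haux
    have h2 : ((τ:ℝ)+1) ^ (-(a+1)) ≤ ((τ:ℝ) ^ (-a) - ((τ:ℝ)+1) ^ (-a)) / a := by
      rw [le_div_iff₀ ha]; linarith [hkey]
    calc ∑ k ∈ Finset.Ioc m τ, ((k : ℝ)) ^ (-(a + 1)) + ((τ:ℝ)+1) ^ (-(a+1))
        ≤ ((m : ℝ) ^ (-a) - (τ : ℝ) ^ (-a)) / a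
          + ((τ:ℝ) ^ (-a) - ((τ:ℝ)+1) ^ (-a)) / a := by
          exact add_le_add this h2
      _ = ((m : ℝ) ^ (-a) - ((τ:ℝ)+1) ^ (-a)) / a := by ring

theorem stmt_19 (n : ℕ) (hn : 0 < n) (q : ℝ) (hq : q ∈ Set.Ioo (0 : ℝ) 1)
    (c : ℝ) (hc1 : (n : ℝ) / (1 - q) < c) (hc2 : (n : ℝ) ≤ c)
    (α ω cund β : ℝ)
    (hα : α = c * (1 - q) / n)
    (hω : ω = Real.exp (-(1 - q)))
    (hcund : cund = (⌊c / n⌋₊ : ℝ) - (c / n) / (⌊c / n⌋₊ : ℝ)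
      - (c / n) * Real.log (⌊c / n⌋₊ : ℝ))
    (hβ : β = Real.exp (-cund * (1 - q)))
    (S : ℕ → ℝ)
    (hS1 : ∀ k : ℕ, 0 < k → (k : ℝ) ≤ c / n → S k = k)
    (hS2 : ∀ k : ℕ, c / n < (k : ℝ) → cund + (c / n) * Real.log k ≤ S k) :
    ∀ τ : ℕ, 0 < τ →
      ∑ k ∈ Finset.Icc 1 τ, Real.exp (-(1 - q) * S k) ≤
        (c / n) * ω + α * β / (α - 1) := by
  obtain ⟨hq0, hq1⟩ := hq
  have hq' : 0 < 1 - q := by linarith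
  have hn0 : (0:ℝ) < n := by exact_mod_cast hn
  have hcn1 : (1:ℝ) ≤ c / n := (one_le_div hn0).mpr hc2
  have hα1 : 1 < α := by
    rw [hα, lt_div_iff₀ hn0]
    rw [div_lt_iff₀ hq'] at hc1
    linarith
  have hβ0 : 0 < β := by rw [hβ]; exact Real.exp_pos _
  have hω0 : 0 < ω := by rw [hω]; exact Real.exp_pos _
  set m := ⌊c / n⌋₊ with hm
  have hm1 : 1 ≤ m := Nat.le_floor (by exact_mod_cast hcn1)
  have hmle : (m : ℝ) ≤ c / n := Nat.floor_le (by positivity)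
  have hmlt : c / n < (m : ℝ) + 1 := Nat.lt_floor_add_one _
  clear_value m
  have hαcn : α = (c / n) * (1 - q) := by rw [hα]; ring
  -- bound on the "small k" part: each term ≤ ω
  have hsmall : ∀ k : ℕ, 1 ≤ k → k ≤ m →
      Real.exp (-(1 - q) * S k) ≤ ω := by
    intro k hk1 hkm
    have hkcn : (k : ℝ) ≤ c / n := le_trans (by exact_mod_cast hkm) hmle
    rw [hS1 k hk1 hkcn, hω]
    apply Real.exp_le_exp.mpr
    have : (1:ℝ) ≤ (k:ℝ) := by exact_mod_cast hk1
    nlinarith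
  -- bound on large k terms
  have hlarge : ∀ k : ℕ, m < k →
      Real.exp (-(1 - q) * S k) ≤ β * (k : ℝ) ^ (-α) := by
    intro k hk
    have hk0 : (0:ℝ) < k := by
      have : 1 ≤ k := hm1.trans hk.le
      exact_mod_cast this
    have hkcn : c / n < (k : ℝ) := by
      calc c / n < (m : ℝ) + 1 := hmlt
        _ ≤ (k : ℝ) := by exact_mod_cast hk
    have hS := hS2 k hkcn
    have h1 : Real.exp (-(1 - q) * S k) ≤
        Real.exp (-(1 - q) * (cund + (c / n) * Real.log k)) := by
      apply Real.exp_le_exp.mpr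
      nlinarith [hS]
    refine h1.trans (le_of_eq ?_)
    rw [Real.rpow_def_of_pos hk0, hβ, ← Real.exp_add]
    congr 1
    rw [hαcn]; ring
  intro τ hτ
  have habκ : 0 ≤ α * β / (α - 1) := by
    have h1 : (0:ℝ) < α - 1 := by linarith
    positivity
  rcases le_or_gt τ m with hcase | hcase
  · -- all small
    have : ∑ k ∈ Finset.Icc 1 τ, Real.exp (-(1 - q) * S k) ≤
        ∑ _k ∈ Finset.Icc 1 τ, ω := by
      apply Finset.sum_le_sum
      intro k hk
      rw [Finset.mem_Icc] at hk
      exact hsmall k hk.1 (hk.2.trans hcase)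
    rw [Finset.sum_const, Nat.card_Icc] at this
    have hτm : (τ : ℝ) ≤ c / n := le_trans (by exact_mod_cast hcase) hmle
    have : ∑ k ∈ Finset.Icc 1 τ, Real.exp (-(1 - q) * S k) ≤ (c / n) * ω := by
      refine this.trans ?_
      have : ((τ + 1 - 1 : ℕ) : ℝ) = (τ : ℝ) := by simp
      rw [nsmul_eq_mul, this]
      nlinarith
    linarith
  · -- split
    have hsplit : Finset.Icc 1 τ = Finset.Icc 1 m ∪ Finset.Ioc m τ := by
      ext k; simp only [Finset.mem_union, Finset.mem_Icc, Finset.mem_Ioc]; omega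
    have hdisj : Disjoint (Finset.Icc 1 m) (Finset.Ioc m τ) := by
      simp only [Finset.disjoint_left, Finset.mem_Icc, Finset.mem_Ioc]
      intro k hk hk2
      omega
    rw [hsplit, Finset.sum_union hdisj]
    have hA : ∑ k ∈ Finset.Icc 1 m, Real.exp (-(1 - q) * S k) ≤ (c / n) * ω := by
      have h1 : ∑ k ∈ Finset.Icc 1 m, Real.exp (-(1 - q) * S k) ≤
          ∑ _k ∈ Finset.Icc 1 m, ω := by
        apply Finset.sum_le_sum
        intro k hk
        rw [Finset.mem_Icc] at hk
        exact hsmall k hk.1 hk.2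
      rw [Finset.sum_const, Nat.card_Icc, nsmul_eq_mul] at h1
      have hcast : ((m + 1 - 1 : ℕ) : ℝ) = (m : ℝ) := by simp
      rw [hcast] at h1
      nlinarith
    have hB : ∑ k ∈ Finset.Ioc m τ, Real.exp (-(1 - q) * S k) ≤
        α * β / (α - 1) := by
      have h1 : ∑ k ∈ Finset.Ioc m τ, Real.exp (-(1 - q) * S k) ≤
          ∑ k ∈ Finset.Ioc m τ, β * (k : ℝ) ^ (-α) := by
        apply Finset.sum_le_sum
        intro k hk
        rw [Finset.mem_Ioc] at hk
        exact hlarge k hk.1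
      rw [← Finset.mul_sum] at h1
      set a := α - 1 with ha
      have ha0 : 0 < a := by rw [ha]; linarith
      have hαa : -α = -(a + 1) := by rw [ha]; ring
      have ha1 : a = α - 1 := ha
      clear_value a
      have h2 : ∑ k ∈ Finset.Ioc m τ, (k : ℝ) ^ (-α) ≤
          ((m : ℝ) ^ (-a) - (τ : ℝ) ^ (-a)) / a := by
        rw [show (fun k : ℕ => (k:ℝ) ^ (-α)) = fun k : ℕ => (k:ℝ) ^ (-(a+1)) by
          funext k; rw [hαa]]
        exact tele a ha0 m hm1 τ hcase.le
      have hm1' : (1:ℝ) ≤ (m : ℝ) := by exact_mod_cast hm1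
      have hmr : (m : ℝ) ^ (-a) ≤ 1 :=
        Real.rpow_le_one_of_one_le_of_nonpos hm1' (by linarith)
      have hτ1 : (1:ℝ) ≤ (τ : ℝ) := by
        exact_mod_cast hm1.trans hcase.le
      have hτr : 0 < (τ : ℝ) ^ (-a) := Real.rpow_pos_of_pos (by linarith) _
      have h3 : ((m : ℝ) ^ (-a) - (τ : ℝ) ^ (-a)) / a ≤ 1 / a := by
        gcongr
        linarith
      have h4 : (0:ℝ) ≤ ∑ k ∈ Finset.Ioc m τ, (k : ℝ) ^ (-α) := by
        apply Finset.sum_nonneg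
        intro k hk
        positivity
      have h5 : β * ∑ k ∈ Finset.Ioc m τ, (k : ℝ) ^ (-α) ≤ β * (1 / a) := by
        apply mul_le_mul_of_nonneg_left _ hβ0.le
        exact h2.trans h3
      have h6 : β * (1 / a) ≤ α * β / a := by
        rw [mul_one_div]
        exact (div_le_div_iff_of_pos_right ha0).mpr (le_mul_of_one_le_left hβ0.le hα1.le)
      calc ∑ k ∈ Finset.Ioc m τ, Real.exp (-(1 - q) * S k)
          ≤ β * ∑ k ∈ Finset.Ioc m τ, (k : ℝ) ^ (-α) := h1
        _ ≤ β * (1 / a) := h5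
        _ ≤ α * β / a := h6
    linarith
end
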